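/- (Sion/von Neumann minimax.) Let X ⊂ ℝⁿ, Y ⊂ ℝᵐ be compact convex sets and f : X × Y → ℝ continuous, with x ↦ f(x, y) concave for each fixed y and y ↦ f(x, y) convex for each fixed x. Then max_{x∈X} min_{y∈Y} f(x, y) = min_{y∈Y} max_{x∈X} f(x, y). -/

import Mathlib

open Set

variable {E F : Type*} [NormedAddCommGroup E] [NormedSpace ℝ E]
  [NormedAddCommGroup F] [NormedSpace ℝ F]

lemma aux_conn {α : Type*} [TopologicalSpace α] [T2Space α] {s A B : Set α}
    (hs : IsPreconnected s) (hA : IsCompact A) (hB : IsCompact B)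
    (hAB : Disjoint A B) (hsub : s ⊆ A ∪ B) : s ⊆ A ∨ s ⊆ B := by
  obtain ⟨U, V, hU, hV, hAU, hBV, hUV⟩ := SeparatedNhds.of_isCompact_isCompact hA hB hAB
  rcases hs.subset_or_subset hU hV hUV (hsub.trans (union_subset_union hAU hBV)) with h | h
  · exact Or.inl fun x hx => (hsub hx).resolve_right fun hxB => hUV.le_bot ⟨h hx, hBV hxB⟩
  · exact Or.inr fun x hx => (hsub hx).resolve_left fun hxA => hUV.le_bot ⟨hAU hxA, h hx⟩

lemma aux_two_point {X : Set E} {Y : Set F}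
    (hXc : IsCompact X) (hYconv : Convex ℝ Y)
    (f : E → F → ℝ)
    (hcont : ContinuousOn (fun p : E × F => f p.1 p.2) (X ×ˢ Y))
    (hconc : ∀ y ∈ Y, ConcaveOn ℝ X (fun x => f x y))
    (hconv : ∀ x ∈ X, ConvexOn ℝ Y (fun y => f x y))
    {y1 y2 : F} (hy1 : y1 ∈ Y) (hy2 : y2 ∈ Y) {a b : ℝ} (hab : a < b)
    (hb : ∀ z ∈ segment ℝ y1 y2, ∃ x ∈ X, b ≤ f x z) :
    ∃ x ∈ X, a ≤ f x y1 ∧ a ≤ f x y2 := by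
  by_contra hcon
  push_neg at hcon
  set z : ℝ → F := fun t => (1 - t) • y1 + t • y2 with hz
  have hzY : ∀ t ∈ Icc (0:ℝ) 1, z t ∈ Y := fun t ht =>
    hYconv hy1 hy2 (by linarith [ht.2]) ht.1 (by ring)
  have hzseg : ∀ t ∈ Icc (0:ℝ) 1, z t ∈ segment ℝ y1 y2 := fun t ht => by
    rw [segment_eq_image]; exact ⟨t, ht, rfl⟩
  have hz0 : z 0 = y1 := by simp [hz]
  have hz1 : z 1 = y2 := by simp [hz]
  set A : Set E := {x ∈ X | a ≤ f x y1} with hA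
  set B : Set E := {x ∈ X | a ≤ f x y2} with hB
  have hABdisj : Disjoint A B := by
    rw [disjoint_left]
    rintro x ⟨hxX, hxa⟩ ⟨-, hxb⟩
    exact absurd hxb (not_le.2 (hcon x hxX hxa))
  have hcx : ∀ y ∈ Y, ContinuousOn (fun x => f x y) X := fun y hy =>
    hcont.comp ((continuous_id.prodMk continuous_const).continuousOn)
      (fun x hx => mk_mem_prod hx hy)
  have hAclosed : IsClosed A :=
    (hcx y1 hy1).preimage_isClosed_of_isClosed hXc.isClosed isClosed_Ici
  have hBclosed : IsClosed B :=
    (hcx y2 hy2).preimage_isClosed_of_isClosed hXc.isClosed isClosed_Ici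
  have hAcomp : IsCompact A := hXc.of_isClosed_subset hAclosed (sep_subset _ _)
  have hBcomp : IsCompact B := hXc.of_isClosed_subset hBclosed (sep_subset _ _)
  set C : ℝ → Set E := fun t => {x ∈ X | b ≤ f x (z t)} with hC
  have hCne : ∀ t ∈ Icc (0:ℝ) 1, (C t).Nonempty := fun t ht => by
    obtain ⟨x, hx, hbx⟩ := hb (z t) (hzseg t ht)
    exact ⟨x, hx, hbx⟩
  have hCsub : ∀ t ∈ Icc (0:ℝ) 1, C t ⊆ A ∪ B := by
    intro t ht x hx
    by_contra hx'
    have h1 : f x y1 < a := lt_of_not_ge fun h => hx' (Or.inl ⟨hx.1, h⟩)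
    have h2 : f x y2 < a := lt_of_not_ge fun h => hx' (Or.inr ⟨hx.1, h⟩)
    have hcomb := (hconv x hx.1).2 hy1 hy2 (by linarith [ht.2] : (0:ℝ) ≤ 1 - t) ht.1
      (by ring : (1 - t) + t = 1)
    simp only [smul_eq_mul] at hcomb
    have hle1 : (1 - t) * f x y1 ≤ (1 - t) * a :=
      mul_le_mul_of_nonneg_left h1.le (by linarith [ht.2])
    have hle2 : t * f x y2 ≤ t * a := mul_le_mul_of_nonneg_left h2.le ht.1
    have := hx.2
    nlinarith
  have hCconv : ∀ t ∈ Icc (0:ℝ) 1, Convex ℝ (C t) := fun t ht =>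
    (hconc (z t) (hzY t ht)).convex_ge b
  set g : ℝ × E → ℝ := fun p => f p.2 (z p.1) with hg
  have hφ : Continuous (fun p : ℝ × E => (p.2, z p.1)) := by
    rw [hz]; fun_prop
  have hgcont : ContinuousOn g (Icc (0:ℝ) 1 ×ˢ X) :=
    hcont.comp hφ.continuousOn (fun p hp => mk_mem_prod hp.2 (hzY p.1 hp.1))
  set KA : Set (ℝ × E) := (Icc (0:ℝ) 1 ×ˢ A) ∩ g ⁻¹' (Ici b) with hKA
  set KB : Set (ℝ × E) := (Icc (0:ℝ) 1 ×ˢ B) ∩ g ⁻¹' (Ici b) with hKB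
  have hKAcomp : IsCompact KA :=
    (isCompact_Icc.prod hAcomp).of_isClosed_subset
      ((hgcont.mono (prod_mono_right (sep_subset _ _))).preimage_isClosed_of_isClosed
        (isClosed_Icc.prod hAclosed) isClosed_Ici) inter_subset_left
  have hKBcomp : IsCompact KB :=
    (isCompact_Icc.prod hBcomp).of_isClosed_subset
      ((hgcont.mono (prod_mono_right (sep_subset _ _))).preimage_isClosed_of_isClosed
        (isClosed_Icc.prod hBclosed) isClosed_Ici) inter_subset_left
  set S1 : Set ℝ := Prod.fst '' KA with hS1
  set S2 : Set ℝ := Prod.fst '' KB with hS2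
  have hS1comp : IsCompact S1 := hKAcomp.image continuous_fst
  have hS2comp : IsCompact S2 := hKBcomp.image continuous_fst
  -- membership characterizations
  have hS1mem : ∀ t, t ∈ S1 ↔ t ∈ Icc (0:ℝ) 1 ∧ ∃ x, x ∈ C t ∩ A := by
    intro t
    constructor
    · rintro ⟨⟨t', x⟩, ⟨⟨ht', hxA⟩, hbx⟩, rfl⟩
      exact ⟨ht', x, ⟨⟨hxA.1, hbx⟩, hxA⟩⟩
    · rintro ⟨ht, x, ⟨⟨hxX, hbx⟩, hxA⟩⟩
      exact ⟨(t, x), ⟨⟨ht, hxA⟩, hbx⟩, rfl⟩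
  have hS2mem : ∀ t, t ∈ S2 ↔ t ∈ Icc (0:ℝ) 1 ∧ ∃ x, x ∈ C t ∩ B := by
    intro t
    constructor
    · rintro ⟨⟨t', x⟩, ⟨⟨ht', hxB⟩, hbx⟩, rfl⟩
      exact ⟨ht', x, ⟨⟨hxB.1, hbx⟩, hxB⟩⟩
    · rintro ⟨ht, x, ⟨⟨hxX, hbx⟩, hxB⟩⟩
      exact ⟨(t, x), ⟨⟨ht, hxB⟩, hbx⟩, rfl⟩
  have hS12disj : Disjoint S1 S2 := by
    rw [disjoint_left]
    intro t ht1 ht2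
    obtain ⟨htI, xa, hxa⟩ := (hS1mem t).1 ht1
    obtain ⟨-, xb, hxb⟩ := (hS2mem t).1 ht2
    rcases aux_conn ((hCconv t htI).isPreconnected) hAcomp hBcomp hABdisj
        (hCsub t htI) with h | h
    · exact hABdisj.le_bot ⟨h hxb.1, hxb.2⟩
    · exact hABdisj.le_bot ⟨hxa.2, h hxa.1⟩
  have hcover : Icc (0:ℝ) 1 ⊆ S1 ∪ S2 := by
    intro t ht
    obtain ⟨x, hx⟩ := hCne t ht
    rcases hCsub t ht hx with hxA | hxB
    · exact Or.inl ((hS1mem t).2 ⟨ht, x, hx, hxA⟩)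
    · exact Or.inr ((hS2mem t).2 ⟨ht, x, hx, hxB⟩)
  have h0 : (0:ℝ) ∈ S1 := by
    obtain ⟨x, hxX, hbx⟩ := hCne 0 (left_mem_Icc.2 zero_le_one)
    refine (hS1mem 0).2 ⟨left_mem_Icc.2 zero_le_one, x, ⟨⟨hxX, hbx⟩, hxX, ?_⟩⟩
    rw [hz0] at hbx
    linarith
  have h1 : (1:ℝ) ∈ S2 := by
    obtain ⟨x, hxX, hbx⟩ := hCne 1 (right_mem_Icc.2 zero_le_one)
    refine (hS2mem 1).2 ⟨right_mem_Icc.2 zero_le_one, x, ⟨⟨hxX, hbx⟩, hxX, ?_⟩⟩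
    rw [hz1] at hbx
    linarith
  rcases aux_conn isPreconnected_Icc hS1comp hS2comp hS12disj hcover with h | h
  · exact hS12disj.le_bot ⟨h (right_mem_Icc.2 zero_le_one), h1⟩
  · exact hS12disj.le_bot ⟨h0, h (left_mem_Icc.2 zero_le_one)⟩

lemma aux_finite {Y : Set F} (hYconv : Convex ℝ Y) (hYne : Y.Nonempty)
    (f : E → F → ℝ) :
    ∀ (L : List F) (X : Set E), IsCompact X → Convex ℝ X → X.Nonempty →
      ContinuousOn (fun p : E × F => f p.1 p.2) (X ×ˢ Y) →
      (∀ y ∈ Y, ConcaveOn ℝ X (fun x => f x y)) →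
      (∀ x ∈ X, ConvexOn ℝ Y (fun y => f x y)) →
      ∀ {a b : ℝ}, a < b → (∀ y ∈ Y, ∃ x ∈ X, b ≤ f x y) →
      (∀ y ∈ L, y ∈ Y) →
      ∃ x ∈ X, ∀ y ∈ L, a ≤ f x y := by
  intro L
  induction L with
  | nil =>
    intro X _ _ hXne _ _ _ a b _ _ _
    obtain ⟨x, hx⟩ := hXne
    exact ⟨x, hx, by simp⟩
  | cons y0 L ih =>
    intro X hXc hXconv hXne hcont hconc hconv a b hab hb hL
    have hy0 : y0 ∈ Y := hL y0 List.mem_cons_self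
    obtain ⟨b', hab', hb'b⟩ := exists_between hab
    set X' : Set E := {x ∈ X | b' ≤ f x y0} with hX'
    have hX'sub : X' ⊆ X := sep_subset _ _
    have hX'conv : Convex ℝ X' := (hconc y0 hy0).convex_ge b'
    have hcx : ContinuousOn (fun x => f x y0) X :=
      hcont.comp ((continuous_id.prodMk continuous_const).continuousOn)
        (fun x hx => mk_mem_prod hx hy0)
    have hX'comp : IsCompact X' :=
      hXc.of_isClosed_subset
        (hcx.preimage_isClosed_of_isClosed hXc.isClosed isClosed_Ici) hX'sub
    have hb' : ∀ y ∈ Y, ∃ x ∈ X', b' ≤ f x y := by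
      intro y hy
      have hseg : ∀ z ∈ segment ℝ y y0, ∃ x ∈ X, b ≤ f x z := fun z hz =>
        hb z (hYconv.segment_subset hy hy0 hz)
      obtain ⟨x, hxX, h1, h2⟩ :=
        aux_two_point hXc hYconv f hcont hconc hconv hy hy0 hb'b hseg
      exact ⟨x, ⟨hxX, h2⟩, h1⟩
    have hX'ne : X'.Nonempty := by
      obtain ⟨y, hy⟩ := hYne
      obtain ⟨x, hx, -⟩ := hb' y hy
      exact ⟨x, hx⟩
    obtain ⟨x, hxX', hxL⟩ := ih X' hX'comp hX'conv hX'ne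
      (hcont.mono (prod_mono_left hX'sub))
      (fun y hy => (hconc y hy).subset hX'sub hX'conv)
      (fun x hx => hconv x (hX'sub hx)) hab' hb'
      (fun y hy => hL y (List.mem_cons_of_mem _ hy))
    refine ⟨x, hX'sub hxX', fun y hy => ?_⟩
    rcases List.mem_cons.1 hy with rfl | hy
    · exact le_trans hab'.le hxX'.2
    · exact hxL y hy

/-- Sion/von Neumann minimax theorem on compact convex subsets of
Euclidean spaces. -/
theorem stmt_16 {n m : ℕ} (X : Set (EuclideanSpace ℝ (Fin n)))
    (Y : Set (EuclideanSpace ℝ (Fin m)))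
    (hXc : IsCompact X) (hXconv : Convex ℝ X) (hXne : X.Nonempty)
    (hYc : IsCompact Y) (hYconv : Convex ℝ Y) (hYne : Y.Nonempty)
    (f : EuclideanSpace ℝ (Fin n) → EuclideanSpace ℝ (Fin m) → ℝ)
    (hcont : ContinuousOn (fun p : EuclideanSpace ℝ (Fin n) × EuclideanSpace ℝ (Fin m) =>
      f p.1 p.2) (X ×ˢ Y))
    (hconc : ∀ y ∈ Y, ConcaveOn ℝ X (fun x => f x y))
    (hconv : ∀ x ∈ X, ConvexOn ℝ Y (fun y => f x y)) :
    sSup ((fun x => sInf ((fun y => f x y) '' Y)) '' X)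
      = sInf ((fun y => sSup ((fun x => f x y) '' X)) '' Y) := by
  -- global bounds
  have hKim : IsCompact ((fun p : _ × _ => f p.1 p.2) '' (X ×ˢ Y)) :=
    (hXc.prod hYc).image_of_continuousOn hcont
  obtain ⟨mb, hmb⟩ := hKim.bddBelow
  obtain ⟨Mb, hMb⟩ := hKim.bddAbove
  have hm : ∀ x ∈ X, ∀ y ∈ Y, mb ≤ f x y := fun x hx y hy =>
    hmb ⟨(x, y), ⟨hx, hy⟩, rfl⟩
  have hM : ∀ x ∈ X, ∀ y ∈ Y, f x y ≤ Mb := fun x hx y hy =>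
    hMb ⟨(x, y), ⟨hx, hy⟩, rfl⟩
  -- continuity slices
  have hcx : ∀ y ∈ Y, ContinuousOn (fun x => f x y) X := fun y hy =>
    hcont.comp ((continuous_id.prodMk continuous_const).continuousOn)
      (fun x hx => mk_mem_prod hx hy)
  set I : EuclideanSpace ℝ (Fin n) → ℝ := fun x => sInf ((fun y => f x y) '' Y) with hI
  set S : EuclideanSpace ℝ (Fin m) → ℝ := fun y => sSup ((fun x => f x y) '' X) with hS
  have hIle : ∀ x ∈ X, ∀ y ∈ Y, I x ≤ f x y := fun x hx y hy =>
    csInf_le ⟨mb, by rintro _ ⟨y', hy', rfl⟩; exact hm x hx y' hy'⟩ ⟨y, hy, rfl⟩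
  have hSge : ∀ y ∈ Y, ∀ x ∈ X, f x y ≤ S y := fun y hy x hx =>
    le_csSup ⟨Mb, by rintro _ ⟨x', hx', rfl⟩; exact hM x' hx' y hy⟩ ⟨x, hx, rfl⟩
  have hIbdd : BddAbove (I '' X) := by
    obtain ⟨y0, hy0⟩ := hYne
    exact ⟨Mb, by rintro _ ⟨x, hx, rfl⟩; exact (hIle x hx y0 hy0).trans (hM x hx y0 hy0)⟩
  have hSbdd : BddBelow (S '' Y) := by
    obtain ⟨x0, hx0⟩ := hXne
    exact ⟨mb, by rintro _ ⟨y, hy, rfl⟩; exact (hm x0 hx0 y hy).trans (hSge y hy x0 hx0)⟩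
  set β : ℝ := sInf (S '' Y) with hβ
  -- β is dominated by every S value, and S is attained
  have hβS : ∀ y ∈ Y, ∃ x ∈ X, β ≤ f x y := by
    intro y hy
    obtain ⟨x, hx, hmax⟩ := hXc.exists_isMaxOn hXne (hcx y hy)
    have hSy : S y = f x y :=
      IsGreatest.csSup_eq ⟨⟨x, hx, rfl⟩, by rintro _ ⟨x', hx', rfl⟩; exact hmax hx'⟩
    exact ⟨x, hx, by rw [← hSy]; exact csInf_le hSbdd ⟨y, hy, rfl⟩⟩
  apply le_antisymm
  · -- easy direction
    apply csSup_le (hXne.image _)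
    rintro _ ⟨x, hx, rfl⟩
    apply le_csInf (hYne.image _)
    rintro _ ⟨y, hy, rfl⟩
    exact (hIle x hx y hy).trans (hSge y hy x hx)
  · -- hard direction
    apply le_of_forall_lt
    intro c hc
    obtain ⟨a, hca, haβ⟩ := exists_between hc
    have claim : ∃ x ∈ X, ∀ y ∈ Y, a ≤ f x y := by
      by_contra hno
      push_neg at hno
      choose yx hyY hylt using hno
      have hnb : ∀ (x : EuclideanSpace ℝ (Fin n)) (hx : x ∈ X),
          ∃ u, IsOpen u ∧ x ∈ u ∧
            u ∩ X ⊆ (fun x' => f x' (yx x hx)) ⁻¹' Iio a := by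
        intro x hx
        have hmem : (fun x' => f x' (yx x hx)) ⁻¹' Iio a ∈ nhdsWithin x X :=
          (hcx (yx x hx) (hyY x hx) x hx).preimage_mem_nhdsWithin
            (Iio_mem_nhds (hylt x hx))
        exact mem_nhdsWithin.1 hmem
      choose u hUopen hxU hUsub using hnb
      obtain ⟨t, hcoverX⟩ := hXc.elim_nhds_subcover'
        (fun x hx => u x hx) (fun x hx => (hUopen x hx).mem_nhds (hxU x hx))
      set L : List (EuclideanSpace ℝ (Fin m)) :=
        t.toList.map (fun p => yx p.1 p.2) with hLdef
      have hLY : ∀ y ∈ L, y ∈ Y := by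
        intro y hy
        obtain ⟨p, -, rfl⟩ := List.mem_map.1 hy
        exact hyY p.1 p.2
      obtain ⟨x, hx, hxa⟩ := aux_finite hYconv hYne f L X hXc hXconv hXne hcont
        hconc hconv haβ hβS hLY
      obtain ⟨p, hpt, hxu⟩ := Set.mem_iUnion₂.1 (hcoverX hx)
      have hlt : f x (yx p.1 p.2) < a := hUsub p.1 p.2 ⟨hxu, hx⟩
      have hmemL : yx p.1 p.2 ∈ L :=
        List.mem_map.2 ⟨p, Finset.mem_toList.2 hpt, rfl⟩
      exact absurd (hxa _ hmemL) (not_le.2 hlt)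
    obtain ⟨x, hx, hxa⟩ := claim
    have hIx : a ≤ I x := le_csInf (hYne.image _) (by rintro _ ⟨y, hy, rfl⟩; exact hxa y hy)
    calc c < a := hca
      _ ≤ I x := hIx
      _ ≤ sSup (I '' X) := le_csSup hIbdd ⟨x, hx, rfl⟩
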